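/- If real numbers k₃,k₄,k₅ and c > 0 satisfy k₅ > c, k₃² − 2k₄ − 2k₅² > 0, and k₄² − 2k₃k₅ − 2k₃²k₅² > 0, then the matrix Y(k₃,k₄,k₅,c) is positive definite. -/

import Mathlib

open Matrix

/-- The 3×3 symmetric matrix `Y(k₃,k₄,k₅,c)` from the paper. -/
noncomputable def Ymat (k3 k4 k5 c : ℝ) : Matrix (Fin 3) (Fin 3) ℝ :=
  !![2*k3^2 - 2*k4 - k5^2, k3*k4 - k3*k5^2,            -(k3*k5);
     k3*k4 - k3*k5^2,      2*k4^2 - 2*k3*k5 - k3^2*k5^2, -(k4*k5);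
     -(k3*k5),             -(k4*k5),                     2*k5^2 - c^2]

/-- If `c > 0`, `k₅ > c`, `k₃² − 2k₄ − 2k₅² > 0` and `k₄² − 2k₃k₅ − 2k₃²k₅² > 0`,
then `Y(k₃,k₄,k₅,c)` is positive definite. -/
theorem stmt2 (k3 k4 k5 c : ℝ) (hc : 0 < c) (h1 : k5 > c)
    (h2 : k3^2 - 2*k4 - 2*k5^2 > 0) (h3 : k4^2 - 2*k3*k5 - 2*k3^2*k5^2 > 0) :
    (Ymat k3 k4 k5 c).PosDef := by
  have hd3 : k5^2 - c^2 > 0 := by nlinarith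
  rw [Matrix.posDef_iff_dotProduct_mulVec]
  constructor
  · ext i j
    fin_cases i <;> fin_cases j <;>
      simp [Ymat, Matrix.conjTranspose, Matrix.transpose]
  · intro x hx
    have hx' : x 0 ≠ 0 ∨ x 1 ≠ 0 ∨ x 2 ≠ 0 := by
      by_contra h
      push_neg at h
      apply hx
      funext i
      fin_cases i <;> simp [h.1, h.2.1, h.2.2]
    set a := x 0
    set b := x 1
    set d := x 2
    have key : (star x) ⬝ᵥ (Ymat k3 k4 k5 c) *ᵥ x =
        (k3*a + k4*b - k5*d)^2 + k5^2*(a - k3*b)^2 +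
        (k3^2 - 2*k4 - 2*k5^2)*a^2 + (k4^2 - 2*k3*k5 - 2*k3^2*k5^2)*b^2 +
        (k5^2 - c^2)*d^2 := by
      simp [Ymat, dotProduct, Matrix.mulVec, Fin.sum_univ_succ, a, b, d]
      ring
    rw [key]
    rcases hx' with h | h | h
    · nlinarith [sq_nonneg (k3*a + k4*b - k5*d), sq_nonneg (a - k3*b), sq_nonneg b,
        sq_nonneg d, mul_pos h2 (pow_pos (abs_pos.mpr h) 2), sq_abs a, sq_nonneg (k5*(a-k3*b)),
        mul_nonneg h3.le (sq_nonneg b), mul_nonneg hd3.le (sq_nonneg d),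
        mul_nonneg (sq_nonneg k5) (sq_nonneg (a - k3*b))]
    · nlinarith [sq_nonneg (k3*a + k4*b - k5*d), sq_nonneg d,
        mul_pos h3 (pow_pos (abs_pos.mpr h) 2), sq_abs b,
        mul_nonneg h2.le (sq_nonneg a), mul_nonneg hd3.le (sq_nonneg d),
        mul_nonneg (sq_nonneg k5) (sq_nonneg (a - k3*b))]
    · nlinarith [sq_nonneg (k3*a + k4*b - k5*d),
        mul_pos hd3 (pow_pos (abs_pos.mpr h) 2), sq_abs d,
        mul_nonneg h2.le (sq_nonneg a), mul_nonneg h3.le (sq_nonneg b),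
        mul_nonneg (sq_nonneg k5) (sq_nonneg (a - k3*b))]
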